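/- Let M, L > 0 and let f : ℝ → ℝ satisfy |f(x)| ≤ M for all x and |f(x) − f(y)| ≤ L·|x − y| for all x, y. Let A ≥ 0 and d ∈ [0,1]. Then there exists C > 0 (depending only on M, L and A) such that for every T ∈ (0,1], every x₀ ∈ ℝ, and all differentiable functions u, v, w : ℝ → ℝ with u'(t) = f(u(t)) + A for t ∈ [0, d·T] and u(0) = x₀, v'(t) = f(v(t)) for t ∈ [d·T, T] and v(d·T) = u(d·T), and w'(t) = f(w(t)) + A·d for t ∈ [0, T] and w(0) = x₀, one has |v(T) − w(T)| ≤ C·T². -/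

import Mathlib

private lemma ftc_aux (f : ℝ → ℝ) (hf : Continuous f) (c a b : ℝ)
    (g : ℝ → ℝ) (hg : ∀ t ∈ Set.Icc a b, HasDerivAt g (f (g t) + c) t) :
    ∀ t ∈ Set.Icc a b, ∫ s in a..t, (f (g s) + c) = g t - g a := by
  intro t ht
  have hat : a ≤ t := ht.1
  have hsub : Set.uIcc a t ⊆ Set.Icc a b := by
    rw [Set.uIcc_of_le hat]
    exact Set.Icc_subset_Icc le_rfl ht.2
  have hgcont : ContinuousOn g (Set.uIcc a t) := fun s hs =>
    ((hg s (hsub hs)).continuousAt).continuousWithinAt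
  have hint : IntervalIntegrable (fun s => f (g s) + c) MeasureTheory.volume a t :=
    ((hf.comp_continuousOn hgcont).add continuousOn_const).intervalIntegrable
  exact intervalIntegral.integral_eq_sub_of_hasDerivAt (fun s hs => hg s (hsub hs)) hint

private lemma bound_aux (f : ℝ → ℝ) (hf : Continuous f) (M c a b : ℝ)
    (hbound : ∀ x, |f x| ≤ M)
    (g : ℝ → ℝ) (hg : ∀ t ∈ Set.Icc a b, HasDerivAt g (f (g t) + c) t) :
    ∀ t ∈ Set.Icc a b, |g t - g a| ≤ (M + |c|) * (t - a) := by
  intro t ht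
  have h := ftc_aux f hf c a b g hg t ht
  rw [← h]
  have hb : ∀ s ∈ Set.uIoc a t, ‖f (g s) + c‖ ≤ M + |c| := by
    intro s _
    calc ‖f (g s) + c‖ ≤ |f (g s)| + |c| := abs_add_le _ _
    _ ≤ M + |c| := by linarith [hbound (g s)]
  have h2 := intervalIntegral.norm_integral_le_of_norm_le_const hb
  rwa [Real.norm_eq_abs, abs_of_nonneg (by linarith [ht.1] : (0:ℝ) ≤ t - a)] at h2

/-- One-period averaging estimate (proof of Proposition 6): the time-T map of the
square-wave forced system (pulse phase with drive A on [0,dT], free phase on [dT,T])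
differs from the time-T map of the averaged system ẋ = f(x) + A·d by at most C·T²,
uniformly in the initial condition, for T ∈ (0,1]. -/
theorem one_period_averaging_estimate (M L A d : ℝ) (f : ℝ → ℝ)
    (hM : 0 < M) (hL : 0 < L)
    (hbound : ∀ x, |f x| ≤ M)
    (hlip : ∀ x y, |f x - f y| ≤ L * |x - y|)
    (hA : 0 ≤ A) (hd : d ∈ Set.Icc (0:ℝ) 1) :
    ∃ C > 0, ∀ T ∈ Set.Ioc (0:ℝ) 1, ∀ x₀ : ℝ, ∀ u v w : ℝ → ℝ,
      (∀ t ∈ Set.Icc 0 (d * T), HasDerivAt u (f (u t) + A) t) → u 0 = x₀ →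
      (∀ t ∈ Set.Icc (d * T) T, HasDerivAt v (f (v t)) t) → v (d * T) = u (d * T) →
      (∀ t ∈ Set.Icc 0 T, HasDerivAt w (f (w t) + A * d) t) → w 0 = x₀ →
      |v T - w T| ≤ C * T ^ 2 := by
  obtain ⟨hd0, hd1⟩ := hd
  -- f is continuous (Lipschitz)
  have hf : Continuous f := by
    have : LipschitzWith (Real.toNNReal L) f := by
      apply LipschitzWith.of_dist_le_mul
      intro x y
      rw [Real.dist_eq, Real.dist_eq, Real.coe_toNNReal L hL.le]
      exact hlip x y
    exact this.continuous
  refine ⟨2 * L * (M + A) + 1, by positivity, ?_⟩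
  rintro T ⟨hT0, hT1⟩ x₀ u v w hu hu0 hv hvu hw hw0
  have hdT0 : 0 ≤ d * T := by positivity
  have hdTT : d * T ≤ T := by nlinarith
  -- rewrite v's derivative with + 0
  have hv' : ∀ t ∈ Set.Icc (d * T) T, HasDerivAt v (f (v t) + 0) t := by
    intro t ht; simpa using hv t ht
  -- a priori bounds
  have hubd := bound_aux f hf M A 0 (d * T) hbound u hu
  have hvbd := bound_aux f hf M 0 (d * T) T hbound v hv'
  have hwbd := bound_aux f hf M (A * d) 0 T hbound w hw
  have hK : (0:ℝ) ≤ M + A := by linarith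
  -- uniform distance from x₀
  have hu_x : ∀ s ∈ Set.Icc 0 (d * T), |u s - x₀| ≤ (M + A) * T := by
    intro s hs
    have := hubd s hs
    rw [hu0, abs_of_nonneg hA] at this
    have hsT : s ≤ T := le_trans hs.2 hdTT
    nlinarith [hs.1]
  have hudT : |u (d * T) - x₀| ≤ (M + A) * (d * T) := by
    have := hubd (d * T) ⟨hdT0, le_rfl⟩
    rwa [hu0, abs_of_nonneg hA, sub_zero] at this
  have hv_x : ∀ s ∈ Set.Icc (d * T) T, |v s - x₀| ≤ (M + A) * T := by
    intro s hs
    have h1 := hvbd s hs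
    rw [hvu, abs_zero, add_zero] at h1
    calc |v s - x₀| ≤ |v s - u (d * T)| + |u (d * T) - x₀| := by
          have := abs_sub_abs_le_abs_sub (v s - x₀) (u (d*T) - x₀)
          calc |v s - x₀| = |(v s - u (d*T)) + (u (d*T) - x₀)| := by ring_nf
          _ ≤ |v s - u (d*T)| + |u (d*T) - x₀| := abs_add_le _ _
    _ ≤ M * (s - d * T) + (M + A) * (d * T) := add_le_add h1 hudT
    _ ≤ (M + A) * T := by nlinarith [hs.1, hs.2]
  have hw_x : ∀ s ∈ Set.Icc 0 T, |w s - x₀| ≤ (M + A) * T := by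
    intro s hs
    have := hwbd s hs
    rw [hw0, sub_zero, abs_of_nonneg (by positivity : (0:ℝ) ≤ A * d)] at this
    have h1 : (0:ℝ) ≤ (M + A * d) * (T - s) :=
      mul_nonneg (by nlinarith) (by linarith [hs.2])
    have h2 : (0:ℝ) ≤ (A - A * d) * T := mul_nonneg (by nlinarith) hT0.le
    nlinarith
  -- FTC identities
  have h1 := ftc_aux f hf A 0 (d * T) u hu (d * T) ⟨hdT0, le_rfl⟩
  have h2 := ftc_aux f hf 0 (d * T) T v hv' T ⟨hdTT, le_rfl⟩
  have h3 := ftc_aux f hf (A * d) 0 T w hw T ⟨hT0.le, le_rfl⟩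
  rw [hu0] at h1
  rw [hvu] at h2
  rw [hw0] at h3
  set c₀ := f x₀ with hc₀
  -- continuity of trajectories on intervals
  have hucont : ContinuousOn u (Set.Icc 0 (d * T)) := fun s hs =>
    (hu s hs).continuousAt.continuousWithinAt
  have hvcont : ContinuousOn v (Set.Icc (d * T) T) := fun s hs =>
    (hv s hs).continuousAt.continuousWithinAt
  have hwcont : ContinuousOn w (Set.Icc 0 T) := fun s hs =>
    (hw s hs).continuousAt.continuousWithinAt
  -- integrability of shifted integrands
  have hi1 : IntervalIntegrable (fun s => f (u s) - c₀) MeasureTheory.volume 0 (d * T) := by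
    apply ContinuousOn.intervalIntegrable
    rw [Set.uIcc_of_le hdT0]
    exact (hf.comp_continuousOn hucont).sub continuousOn_const
  have hi2 : IntervalIntegrable (fun s => f (v s) - c₀) MeasureTheory.volume (d * T) T := by
    apply ContinuousOn.intervalIntegrable
    rw [Set.uIcc_of_le hdTT]
    exact (hf.comp_continuousOn hvcont).sub continuousOn_const
  have hi3 : IntervalIntegrable (fun s => f (w s) - c₀) MeasureTheory.volume 0 T := by
    apply ContinuousOn.intervalIntegrable
    rw [Set.uIcc_of_le hT0.le]
    exact (hf.comp_continuousOn hwcont).sub continuousOn_const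
  -- decompose integrals
  have e1 : u (d * T) - x₀ = (∫ s in (0:ℝ)..(d * T), (f (u s) - c₀)) + (c₀ + A) * (d * T) := by
    rw [← h1]
    have : (fun s => f (u s) + A) = fun s => (f (u s) - c₀) + (c₀ + A) := by
      funext s; ring
    rw [this, intervalIntegral.integral_add hi1 intervalIntegrable_const,
      intervalIntegral.integral_const, smul_eq_mul, sub_zero]
    ring
  have e2 : v T - u (d * T) = (∫ s in (d * T)..T, (f (v s) - c₀)) + c₀ * (T - d * T) := by
    rw [← h2]
    have : (fun s => f (v s) + 0) = fun s => (f (v s) - c₀) + c₀ := by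
      funext s; ring
    rw [this, intervalIntegral.integral_add hi2 intervalIntegrable_const,
      intervalIntegral.integral_const, smul_eq_mul]
    ring
  have e3 : w T - x₀ = (∫ s in (0:ℝ)..T, (f (w s) - c₀)) + (c₀ + A * d) * T := by
    rw [← h3]
    have : (fun s => f (w s) + A * d) = fun s => (f (w s) - c₀) + (c₀ + A * d) := by
      funext s; ring
    rw [this, intervalIntegral.integral_add hi3 intervalIntegrable_const,
      intervalIntegral.integral_const, smul_eq_mul, sub_zero]
    ring
  -- bounds on shifted integrals
  have hLb : ∀ (z : ℝ), |z - x₀| ≤ (M + A) * T → ‖f z - c₀‖ ≤ L * ((M + A) * T) := by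
    intro z hz
    rw [Real.norm_eq_abs]
    calc |f z - c₀| ≤ L * |z - x₀| := hlip z x₀
    _ ≤ L * ((M + A) * T) := by nlinarith
  have b1 : |∫ s in (0:ℝ)..(d * T), (f (u s) - c₀)| ≤ L * ((M + A) * T) * (d * T) := by
    have := intervalIntegral.norm_integral_le_of_norm_le_const
      (C := L * ((M + A) * T)) (a := (0:ℝ)) (b := d * T) (f := fun s => f (u s) - c₀) ?_
    · rwa [Real.norm_eq_abs, sub_zero, abs_of_nonneg hdT0] at this
    · intro s hs
      rw [Set.uIoc_of_le hdT0] at hs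
      exact hLb (u s) (hu_x s ⟨hs.1.le, hs.2⟩)
  have b2 : |∫ s in (d * T)..T, (f (v s) - c₀)| ≤ L * ((M + A) * T) * (T - d * T) := by
    have := intervalIntegral.norm_integral_le_of_norm_le_const
      (C := L * ((M + A) * T)) (a := d * T) (b := T) (f := fun s => f (v s) - c₀) ?_
    · rwa [Real.norm_eq_abs, abs_of_nonneg (by linarith : (0:ℝ) ≤ T - d * T)] at this
    · intro s hs
      rw [Set.uIoc_of_le hdTT] at hs
      exact hLb (v s) (hv_x s ⟨hs.1.le, hs.2⟩)
  have b3 : |∫ s in (0:ℝ)..T, (f (w s) - c₀)| ≤ L * ((M + A) * T) * T := by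
    have := intervalIntegral.norm_integral_le_of_norm_le_const
      (C := L * ((M + A) * T)) (a := (0:ℝ)) (b := T) (f := fun s => f (w s) - c₀) ?_
    · rwa [Real.norm_eq_abs, sub_zero, abs_of_nonneg hT0.le] at this
    · intro s hs
      rw [Set.uIoc_of_le hT0.le] at hs
      exact hLb (w s) (hw_x s ⟨hs.1.le, hs.2⟩)
  -- combine
  have key : v T - w T = (∫ s in (0:ℝ)..(d * T), (f (u s) - c₀)) +
      (∫ s in (d * T)..T, (f (v s) - c₀)) - (∫ s in (0:ℝ)..T, (f (w s) - c₀)) := by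
    have : v T - w T = (v T - u (d * T)) + (u (d * T) - x₀) - (w T - x₀) := by ring
    rw [this, e1, e2, e3]; ring
  rw [key]
  calc |(∫ s in (0:ℝ)..(d * T), (f (u s) - c₀)) + (∫ s in (d * T)..T, (f (v s) - c₀))
        - (∫ s in (0:ℝ)..T, (f (w s) - c₀))|
      ≤ |∫ s in (0:ℝ)..(d * T), (f (u s) - c₀)| + |∫ s in (d * T)..T, (f (v s) - c₀)|
        + |∫ s in (0:ℝ)..T, (f (w s) - c₀)| := by
        apply (abs_sub _ _).trans
        exact add_le_add (abs_add_le _ _) le_rfl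
  _ ≤ L * ((M + A) * T) * (d * T) + L * ((M + A) * T) * (T - d * T)
        + L * ((M + A) * T) * T := add_le_add (add_le_add b1 b2) b3
  _ = 2 * L * (M + A) * T ^ 2 := by ring
  _ ≤ (2 * L * (M + A) + 1) * T ^ 2 := by nlinarith
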